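/- arXiv:1710.10078 — 2 statements merged into one kernel-verified Lean document; each statement's English description precedes it below -/
import Mathlib

section
/- If X is a separable Banach function space on the unit circle, then the set of trigonometric polynomials is dense in X. -/
open MeasureTheory Filter Real Set
open scoped ENNReal Topology NNReal

noncomputable section

instance : Fact (0 < 2 * π) := ⟨by positivity⟩

/-- The unit circle, realized as `ℝ / 2πℤ`. -/
abbrev UC := AddCircle (2 * π)

/-- Normalized Lebesgue (Haar) measure on the circle. -/
def m : Measure UC := AddCircle.haarAddCircle

/-- The `n`-th Fejér kernel on the circle. -/
def fejer (n : ℕ) (x : UC) : ℂ :=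
  ∑ k ∈ Finset.Icc (-(n : ℤ)) (n : ℤ), ((1 - (|k| : ℝ) / (n + 1)) : ℂ) * fourier k x

/-- The `n`-th Fejér kernel as a function of the angle `θ`. -/
def fejerR (n : ℕ) (θ : ℝ) : ℝ :=
  ∑ k ∈ Finset.Icc (-(n : ℤ)) (n : ℤ), (1 - (|k| : ℝ) / (n + 1)) * Real.cos (k * θ)

/-- Convolution on the circle with respect to the normalized measure. -/
def conv (f g : UC → ℂ) (x : UC) : ℂ := ∫ y, f (x - y) * g y ∂m

/-- Convolution of nonnegative functions on the circle. -/
def convNN (f g : UC → ℝ≥0∞) (x : UC) : ℝ≥0∞ := ∫⁻ y, f (x - y) * g y ∂m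

/-- The set of trigonometric (Laurent) polynomials on the circle. -/
def TrigPoly : Set (UC → ℂ) :=
  {q | ∃ (n : ℕ) (α : ℤ → ℂ), q = fun x => ∑ k ∈ Finset.Icc (-(n : ℤ)) (n : ℤ), α k * fourier k x}

/-- The set of analytic polynomials on the circle. -/
def AnalyticPoly : Set (UC → ℂ) :=
  {q | ∃ (n : ℕ) (α : ℕ → ℂ), q = fun x => ∑ k ∈ Finset.range (n + 1), α k * fourier (k : ℤ) x}

/-- An arc of the circle. -/
def IsArc (I : Set UC) : Prop := ∃ (c : UC) (r : ℝ), 0 < r ∧ I = Metric.ball c r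

/-- The (uncentered) Hardy–Littlewood maximal function over arcs of the circle. -/
def HLmax (f : UC → ℂ) (t : UC) : ℝ≥0∞ :=
  ⨆ (I : Set UC) (_ : IsArc I ∧ t ∈ I), (m I)⁻¹ * ∫⁻ x in I, (‖f x‖₊ : ℝ≥0∞) ∂m

/-- A Banach function norm on the circle (Bennett–Sharpley axioms (A1)–(A5)). -/
structure BFNorm where
  ρ : (UC → ℝ≥0∞) → ℝ≥0∞
  eq_zero_iff : ∀ f : UC → ℝ≥0∞, Measurable f → (ρ f = 0 ↔ f =ᵐ[m] 0)
  smul_eq : ∀ (f : UC → ℝ≥0∞) (a : ℝ≥0), ρ (fun t => (a : ℝ≥0∞) * f t) = a * ρ f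
  triangle : ∀ f g : UC → ℝ≥0∞, ρ (f + g) ≤ ρ f + ρ g
  mono : ∀ f g : UC → ℝ≥0∞, f ≤ᵐ[m] g → ρ f ≤ ρ g
  fatou : ∀ (fs : ℕ → UC → ℝ≥0∞) (f : UC → ℝ≥0∞), (∀ n, fs n ≤ᵐ[m] fs (n + 1)) →
    (∀ᵐ t ∂m, Tendsto (fun n => fs n t) atTop (𝓝 (f t))) →
    Tendsto (fun n => ρ (fs n)) atTop (𝓝 (ρ f))
  finite_indicator : ∀ E : Set UC, MeasurableSet E → ρ (E.indicator 1) < ⊤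
  integral_le : ∀ E : Set UC, MeasurableSet E → ∃ C : ℝ≥0∞, 0 < C ∧ C < ⊤ ∧
    ∀ f : UC → ℝ≥0∞, ∫⁻ t in E, f t ∂m ≤ C * ρ f

/-- The norm of a complex-valued function in the Banach function space. -/
def BFNorm.N (ρ : BFNorm) (f : UC → ℂ) : ℝ≥0∞ := ρ.ρ (fun t => (‖f t‖₊ : ℝ≥0∞))

/-- Membership in the Banach function space `X`. -/
def BFNorm.mem (ρ : BFNorm) (f : UC → ℂ) : Prop := AEStronglyMeasurable f m ∧ ρ.N f < ⊤

/-- The associate norm `ρ'`. -/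
def BFNorm.assoc (ρ : BFNorm) (g : UC → ℝ≥0∞) : ℝ≥0∞ :=
  ⨆ (f : UC → ℝ≥0∞) (_ : Measurable f ∧ ρ.ρ f ≤ 1), ∫⁻ t, f t * g t ∂m

/-- The associate-space norm of a complex-valued function. -/
def BFNorm.Nassoc (ρ : BFNorm) (f : UC → ℂ) : ℝ≥0∞ := ρ.assoc (fun t => (‖f t‖₊ : ℝ≥0∞))

/-- Separability of the Banach function space `X`. -/
def BFNorm.Separable (ρ : BFNorm) : Prop :=
  ∃ D : Set (UC → ℂ), D.Countable ∧ (∀ g ∈ D, ρ.mem g) ∧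
    ∀ f, ρ.mem f → ∀ ε : ℝ≥0∞, 0 < ε → ∃ g ∈ D, ρ.N (f - g) < ε

/-- Density of a set of functions in the Banach function space `X`. -/
def BFNorm.DenseIn (ρ : BFNorm) (S : Set (UC → ℂ)) : Prop :=
  ∀ f, ρ.mem f → ∀ ε : ℝ≥0∞, 0 < ε → ∃ g ∈ S, ρ.N (f - g) < ε

/-- Rearrangement invariance: equimeasurable functions have equal norm. -/
def BFNorm.RearrInv (ρ : BFNorm) : Prop :=
  ∀ f g : UC → ℝ≥0∞, Measurable f → Measurable g →
    (∀ lam : ℝ≥0∞, m {t | lam < f t} = m {t | lam < g t}) → ρ.ρ f = ρ.ρ g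

/-- Boundedness of the Hardy–Littlewood maximal operator on the associate space. -/
def MaximalBoundedOnAssoc (ρ : BFNorm) : Prop :=
  ∃ C : ℝ≥0∞, C < ⊤ ∧ ∀ f : UC → ℂ, ρ.assoc (HLmax f) ≤ C * ρ.Nassoc f

/-- The modular of the variable Lebesgue space `L^{p(·)}`. -/
def VLmodular (p : UC → ℝ) (f : UC → ℂ) : ℝ≥0∞ := ∫⁻ t, (‖f t‖₊ : ℝ≥0∞) ^ (p t) ∂m

/-- Membership in the variable Lebesgue space `L^{p(·)}`. -/
def VLmem (p : UC → ℝ) (f : UC → ℂ) : Prop :=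
  AEStronglyMeasurable f m ∧ ∃ c : ℝ, 0 < c ∧ VLmodular p (fun t => c⁻¹ • f t) < ⊤

/-- The Luxemburg–Nakano norm of the variable Lebesgue space `L^{p(·)}`. -/
def VLnorm (p : UC → ℝ) (f : UC → ℂ) : ℝ :=
  sInf {c : ℝ | 0 < c ∧ VLmodular p (fun t => c⁻¹ • f t) ≤ 1}

/-- Local log-Hölder continuity of a function on the circle. -/
def LocLogHolder (r : UC → ℝ) : Prop :=
  ∃ C₀ : ℝ, 0 < C₀ ∧ ∀ x y : UC, dist x y < 1/2 → |r x - r y| ≤ C₀ / (-Real.log (dist x y))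

end

noncomputable section

namespace BFAux

instance : IsProbabilityMeasure m := by unfold m; infer_instance

variable (ρ : BFNorm)

lemma rho_zero : ρ.ρ (fun _ => 0) = 0 := by
  have h := ρ.smul_eq (fun _ => 0) 0
  simpa using h

lemma rho_mono_ae {f g : UC → ℝ≥0∞} (h : f ≤ᵐ[m] g) : ρ.ρ f ≤ ρ.ρ g := ρ.mono f g h

lemma rho_mono {f g : UC → ℝ≥0∞} (h : ∀ t, f t ≤ g t) : ρ.ρ f ≤ ρ.ρ g :=
  ρ.mono f g (Filter.Eventually.of_forall h)

lemma rho_congr_ae {f g : UC → ℝ≥0∞} (h : f =ᵐ[m] g) : ρ.ρ f = ρ.ρ g :=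
  le_antisymm (rho_mono_ae ρ h.le) (rho_mono_ae ρ h.symm.le)

lemma rho_one_lt_top : ρ.ρ (fun _ => 1) < ⊤ := by
  have h := ρ.finite_indicator Set.univ MeasurableSet.univ
  rw [Set.indicator_univ] at h; exact h

lemma rho_const (c : ℝ≥0) : ρ.ρ (fun _ => (c : ℝ≥0∞)) = c * ρ.ρ (fun _ => 1) := by
  have h := ρ.smul_eq (fun _ => 1) c
  simpa using h

lemma N_triangle (f g : UC → ℂ) : ρ.N (f + g) ≤ ρ.N f + ρ.N g := by
  refine le_trans ?_ (ρ.triangle (fun t => (‖f t‖₊ : ℝ≥0∞)) (fun t => (‖g t‖₊ : ℝ≥0∞)))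
  refine rho_mono ρ fun t => ?_
  simp only [Pi.add_apply]
  exact_mod_cast (nnnorm_add_le (f t) (g t))

lemma N_sub_rev (f g : UC → ℂ) : ρ.N (f - g) = ρ.N (g - f) := by
  unfold BFNorm.N
  congr 1
  funext t
  simp only [Pi.sub_apply]
  rw [← neg_sub (g t) (f t), nnnorm_neg]

lemma N_sub_triangle (f g h : UC → ℂ) : ρ.N (f - h) ≤ ρ.N (f - g) + ρ.N (g - h) := by
  have : f - h = (f - g) + (g - h) := by funext t; simp only [Pi.sub_apply, Pi.add_apply]; ring
  rw [this]
  exact N_triangle ρ _ _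


/-- Separability implies absolutely continuous norm. -/
lemma ac (hsep : ρ.Separable) (f : UC → ℂ) (hfm : Measurable f) (hf : ρ.N f < ⊤)
    (E : ℕ → Set UC) (hEm : ∀ n, MeasurableSet (E n)) (hEd : ∀ n, E (n + 1) ⊆ E n)
    (hE0 : m (⋂ n, E n) = 0) (ε : ℝ≥0∞) (hε : 0 < ε) :
    ∃ n, ρ.ρ (fun t => (E n).indicator (fun t => (‖f t‖₊ : ℝ≥0∞)) t) < ε := by
  set w : UC → ℝ≥0∞ := fun t => (‖f t‖₊ : ℝ≥0∞) with hw
  by_contra hbad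
  push_neg at hbad
  set ε₀ : ℝ≥0∞ := min ε 1 with hε₀def
  have hε₀pos : 0 < ε₀ := lt_min hε zero_lt_one
  have hε₀ne : ε₀ ≠ 0 := hε₀pos.ne'
  have hε₀top : ε₀ ≠ ⊤ := (lt_of_le_of_lt (min_le_right _ _) (by norm_num)).ne
  have hbad₀ : ∀ n, ε₀ ≤ ρ.ρ (fun t => (E n).indicator w t) :=
    fun n => le_trans (min_le_left _ _) (hbad n)
  have hEanti : Antitone E := antitone_nat_of_succ_le hEd
  have haeU : ∀ᵐ t ∂m, t ∉ ⋂ n, E n := by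
    rw [← measure_eq_zero_iff_ae_notMem]; exact hE0
  -- Step A : splitting off blocks of norm > ε₀/2
  have stepA : ∀ n, ∃ k, ε₀ / 2 < ρ.ρ (fun t => (E n \ E (n + k)).indicator w t) := by
    intro n
    by_contra hA
    push_neg at hA
    have hmono : ∀ k, (fun t => (E n \ E (n + k)).indicator w t)
        ≤ᵐ[m] (fun t => (E n \ E (n + k + 1)).indicator w t) := by
      intro k
      refine Filter.Eventually.of_forall fun t => ?_
      exact Set.indicator_le_indicator_of_subset
        (Set.diff_subset_diff_right (hEanti (by omega))) (fun t => zero_le) t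
    have htendpt : ∀ᵐ t ∂m, Tendsto (fun k => (E n \ E (n + k)).indicator w t) atTop
        (𝓝 ((E n).indicator w t)) := by
      filter_upwards [haeU] with t ht
      by_cases htn : t ∈ E n
      · obtain ⟨K, htK⟩ : ∃ K, t ∉ E K := by
          by_contra hc; push_neg at hc; exact ht (Set.mem_iInter.2 hc)
        have : ∀ k ≥ K, (E n \ E (n + k)).indicator w t = (E n).indicator w t := by
          intro k hk
          rw [Set.indicator_of_mem htn, Set.indicator_of_mem]
          exact ⟨htn, fun hmem => htK (hEanti (by omega) hmem)⟩
        exact tendsto_atTop_of_eventually_const this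
      · have : ∀ k, (E n \ E (n + k)).indicator w t = (E n).indicator w t := by
          intro k
          rw [Set.indicator_of_notMem htn, Set.indicator_of_notMem
            (fun hmem => htn hmem.1)]
        exact tendsto_atTop_of_eventually_const (i₀ := 0) (fun k _ => this k)
    have htend := ρ.fatou _ _ hmono htendpt
    have hle : ρ.ρ (fun t => (E n).indicator w t) ≤ ε₀ / 2 :=
      le_of_tendsto' htend hA
    exact absurd (lt_of_le_of_lt (hbad₀ n) (lt_of_le_of_lt hle
      (ENNReal.half_lt_self hε₀ne hε₀top))) (lt_irrefl _)
  choose φ hφ using stepA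
  -- the sequence of indices
  set nseq : ℕ → ℕ := fun k => Nat.rec 0 (fun _ nk => nk + φ nk) k with hnseq
  have hnsucc : ∀ k, nseq (k + 1) = nseq k + φ (nseq k) := fun k => rfl
  have hnmono : Monotone nseq := monotone_nat_of_le_succ (fun k => by rw [hnsucc]; omega)
  set G : ℕ → Set UC := fun k => E (nseq k) \ E (nseq (k + 1)) with hG
  have hGnorm : ∀ k, ε₀ / 2 < ρ.ρ (fun t => (G k).indicator w t) := by
    intro k; have := hφ (nseq k); rwa [← hnsucc] at this
  have hGdisj : ∀ k l, k < l → Disjoint (G k) (G l) := by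
    intro k l hkl
    have h1 : G l ⊆ E (nseq (k + 1)) :=
      (Set.diff_subset).trans (hEanti (hnmono hkl))
    exact Set.disjoint_of_subset_right h1 Set.disjoint_sdiff_left
  have hGmeas : ∀ k, MeasurableSet (G k) := fun k => (hEm _).diff (hEm _)
  -- the uncountable family
  set B : Set ℕ → Set UC := fun s => ⋃ k ∈ s, G k with hB
  have hBmeas : ∀ s, MeasurableSet (B s) := fun s =>
    MeasurableSet.biUnion (Set.to_countable s) (fun k _ => hGmeas k)
  set h : Set ℕ → UC → ℂ := fun s => (B s).indicator f with hh
  have hmem : ∀ s, ρ.mem (h s) := by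
    intro s
    constructor
    · exact (hfm.aestronglyMeasurable).indicator (hBmeas s)
    · refine lt_of_le_of_lt ?_ hf
      refine rho_mono ρ fun t => ?_
      by_cases ht : t ∈ B s
      · simp [hh, Set.indicator_of_mem ht]
      · simp [hh, Set.indicator_of_notMem ht]
  have hpoint : ∀ (s s' : Set ℕ) (k), k ∈ s → k ∉ s' →
      ∀ t, (G k).indicator w t ≤ (‖(h s - h s') t‖₊ : ℝ≥0∞) := by
    intro s s' k hks hks' t
    by_cases htG : t ∈ G k
    · have htBs : t ∈ B s := Set.mem_biUnion hks htG
      have htBs' : t ∉ B s' := by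
        intro hc
        obtain ⟨l, hls', htl⟩ := Set.mem_iUnion₂.1 hc
        have hlk : l ≠ k := fun he => hks' (he ▸ hls')
        rcases hlk.lt_or_gt with hlt | hlt
        · exact (hGdisj l k hlt).ne_of_mem htl htG rfl
        · exact (hGdisj k l hlt).ne_of_mem htG htl rfl
      rw [Set.indicator_of_mem htG]
      simp only [Pi.sub_apply, hh, Set.indicator_of_mem htBs, Set.indicator_of_notMem htBs']
      simp [hw]
    · rw [Set.indicator_of_notMem htG]; exact zero_le
  have hsepn : ∀ s s' : Set ℕ, s ≠ s' → ε₀ / 2 < ρ.N (h s - h s') := by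
    intro s s' hne
    have : ¬ ∀ k, k ∈ s ↔ k ∈ s' := fun hc => hne (Set.ext hc)
    push_neg at this
    obtain ⟨k, hk⟩ := this
    rcases hk with ⟨hks, hks'⟩ | ⟨hks, hks'⟩
    · exact lt_of_lt_of_le (hGnorm k) (rho_mono ρ (hpoint s s' k hks hks'))
    · rw [N_sub_rev]
      exact lt_of_lt_of_le (hGnorm k) (rho_mono ρ (hpoint s' s k hks' hks))
  -- separability contradiction
  obtain ⟨D, hDc, _, hDdense⟩ := hsep
  have hδpos : 0 < ε₀ / 2 / 2 := by
    refine ENNReal.div_pos ?_ (by norm_num)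
    exact (ENNReal.div_pos hε₀ne (by norm_num)).ne'
  have hchoice : ∀ s : Set ℕ, ∃ g ∈ D, ρ.N (h s - g) < ε₀ / 2 / 2 :=
    fun s => hDdense (h s) (hmem s) _ hδpos
  choose d hdD hdN using hchoice
  have hinj : Function.Injective d := by
    intro s s' he
    by_contra hne
    have h1 : ρ.N (h s - h s') ≤ ρ.N (h s - d s) + ρ.N (h s' - d s') := by
      refine le_trans (N_sub_triangle ρ (h s) (d s) (h s')) ?_
      rw [N_sub_rev ρ (d s) (h s'), he]
    have h2 : ρ.N (h s - d s) + ρ.N (h s' - d s') < ε₀ / 2 / 2 + ε₀ / 2 / 2 :=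
      ENNReal.add_lt_add (hdN s) (hdN s')
    rw [ENNReal.add_halves] at h2
    exact absurd (lt_of_le_of_lt h1 h2) (not_lt_of_gt (hsepn s s' hne))
  have huniv : (Set.univ : Set (Set ℕ)).Countable := by
    refine Set.Countable.mono ?_ (hDc.preimage hinj)
    intro s _
    exact hdD s
  have : Countable (Set ℕ) := Set.countable_univ_iff.mp huniv
  obtain ⟨F, hF⟩ := this.exists_injective_nat
  exact Function.cantor_injective F hF


/-- Small sets have small indicator-norm, given separability. -/
lemma small (hsep : ρ.Separable) (ε : ℝ≥0∞) (hε : 0 < ε) :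
    ∃ δ : ℝ≥0∞, 0 < δ ∧ ∀ A : Set UC, MeasurableSet A → m A < δ →
      ρ.ρ (fun t => A.indicator (fun _ => (1 : ℝ≥0∞)) t) < ε := by
  by_contra hbad
  push_neg at hbad
  have hchoice : ∀ k : ℕ, ∃ A : Set UC, MeasurableSet A ∧ m A < (2 : ℝ≥0∞)⁻¹ ^ k ∧
      ε ≤ ρ.ρ (fun t => A.indicator (fun _ => (1 : ℝ≥0∞)) t) := by
    intro k
    obtain ⟨A, hA1, hA2, hA3⟩ := hbad ((2 : ℝ≥0∞)⁻¹ ^ k)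
      (ENNReal.pow_pos (by norm_num) k)
    exact ⟨A, hA1, hA2, hA3⟩
  choose A hAm hAsmall hAnorm using hchoice
  set E : ℕ → Set UC := fun n => ⋃ k, A (n + k) with hE
  have hEm : ∀ n, MeasurableSet (E n) := fun n => MeasurableSet.iUnion (fun k => hAm _)
  have hEd : ∀ n, E (n + 1) ⊆ E n := by
    intro n t ht
    obtain ⟨k, hk⟩ := Set.mem_iUnion.1 ht
    exact Set.mem_iUnion.2 ⟨k + 1, by rw [show n + (k + 1) = n + 1 + k by omega]; exact hk⟩
  have hEbound : ∀ n, m (E n) ≤ 2 * (2 : ℝ≥0∞)⁻¹ ^ n := by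
    intro n
    calc m (E n) ≤ ∑' k, m (A (n + k)) := measure_iUnion_le _
    _ ≤ ∑' k, (2 : ℝ≥0∞)⁻¹ ^ (n + k) := ENNReal.tsum_le_tsum (fun k => (hAsmall _).le)
    _ = (2 : ℝ≥0∞)⁻¹ ^ n * ∑' k, (2 : ℝ≥0∞)⁻¹ ^ k := by
        rw [← ENNReal.tsum_mul_left]; congr 1; funext k; rw [pow_add]
    _ = (2 : ℝ≥0∞)⁻¹ ^ n * 2 := by
        rw [ENNReal.tsum_geometric]
        congr 1
        rw [show (1 : ℝ≥0∞) - 2⁻¹ = 2⁻¹ by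
          rw [ENNReal.sub_eq_of_eq_add (by norm_num)]
          rw [ENNReal.inv_two_add_inv_two]]
        exact inv_inv (2 : ℝ≥0∞)
    _ = 2 * (2 : ℝ≥0∞)⁻¹ ^ n := mul_comm _ _
  have hE0 : m (⋂ n, E n) = 0 := by
    have hle : ∀ n, m (⋂ i, E i) ≤ 2 * (2 : ℝ≥0∞)⁻¹ ^ n :=
      fun n => le_trans (measure_mono (Set.iInter_subset _ n)) (hEbound n)
    have htend : Tendsto (fun n => 2 * (2 : ℝ≥0∞)⁻¹ ^ n) atTop (𝓝 0) := by
      have h1 : Tendsto (fun n : ℕ => (2 : ℝ≥0∞)⁻¹ ^ n) atTop (𝓝 0) :=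
        ENNReal.tendsto_pow_atTop_nhds_zero_of_lt_one
          (by rw [ENNReal.inv_lt_one]; norm_num)
      have := ENNReal.Tendsto.const_mul (a := (2:ℝ≥0∞)) h1 (Or.inr (by norm_num))
      simpa using this
    exact le_antisymm (ge_of_tendsto' htend hle) (zero_le)
  obtain ⟨n, hn⟩ := ac ρ hsep (fun _ => 1) measurable_const
    (by
      have : ρ.N (fun _ => (1 : ℂ)) = ρ.ρ (fun _ => 1) := by
        unfold BFNorm.N; congr 1; funext t; norm_num
      rw [this]; exact rho_one_lt_top ρ)
    E hEm hEd hE0 ε hε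
  have hsub : A n ⊆ E n := by
    intro t ht; exact Set.mem_iUnion.2 ⟨0, by simpa using ht⟩
  have hmono : ρ.ρ (fun t => (A n).indicator (fun _ => (1 : ℝ≥0∞)) t)
      ≤ ρ.ρ (fun t => (E n).indicator (fun t => (‖(1 : ℂ)‖₊ : ℝ≥0∞)) t) := by
    refine rho_mono ρ fun t => ?_
    have : (fun _ : UC => (‖(1 : ℂ)‖₊ : ℝ≥0∞)) = fun _ => (1 : ℝ≥0∞) := by
      funext t; norm_num
    rw [this]
    exact Set.indicator_le_indicator_of_subset hsub (fun t => zero_le) t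
  exact absurd (lt_of_le_of_lt (le_trans (hAnorm n) hmono) hn) (lt_irrefl _)


/-- Truncation: every element of X is approximated by bounded measurable functions. -/
lemma trunc (hsep : ρ.Separable) (f : UC → ℂ) (hmem : ρ.mem f) (ε : ℝ≥0∞) (hε : 0 < ε) :
    ∃ (M : ℝ) (fb : UC → ℂ), 0 < M ∧ Measurable fb ∧ (∀ t, ‖fb t‖ ≤ M) ∧
      ρ.N (f - fb) < ε := by
  obtain ⟨hsm, hNf⟩ := hmem
  set f' : UC → ℂ := hsm.mk f with hf'
  have hf'm : Measurable f' := hsm.measurable_mk.mono le_rfl le_rfl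
  have hae : f =ᵐ[m] f' := hsm.ae_eq_mk
  have hNf' : ρ.N f' < ⊤ := by
    refine lt_of_le_of_lt (le_of_eq ?_) hNf
    refine rho_congr_ae ρ ?_
    filter_upwards [hae] with t ht
    rw [ht]
  set E : ℕ → Set UC := fun n => {t | (n : ℝ) < ‖f' t‖} with hE
  have hEm : ∀ n, MeasurableSet (E n) :=
    fun n => measurableSet_lt measurable_const hf'm.norm
  have hEd : ∀ n, E (n + 1) ⊆ E n := by
    intro n t ht
    simp only [hE, Set.mem_setOf_eq] at ht ⊢
    refine lt_of_le_of_lt ?_ ht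
    exact_mod_cast Nat.le_succ n
  have hE0 : m (⋂ n, E n) = 0 := by
    have : (⋂ n, E n) = ∅ := by
      ext t
      simp only [Set.mem_iInter, Set.mem_empty_iff_false, iff_false]
      intro hc
      obtain ⟨n, hn⟩ := exists_nat_gt (‖f' t‖)
      exact absurd (hc n) (not_lt.2 hn.le)
    rw [this, measure_empty]
  obtain ⟨n, hn⟩ := ac ρ hsep f' hf'm hNf' E hEm hEd hE0 ε hε
  refine ⟨(n : ℝ) + 1, fun t => if ‖f' t‖ ≤ (n : ℝ) then f' t else 0, by positivity, ?_, ?_, ?_⟩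
  · exact Measurable.ite (measurableSet_le hf'm.norm measurable_const) hf'm measurable_const
  · intro t
    by_cases ht : ‖f' t‖ ≤ (n : ℝ)
    · simp only [if_pos ht]; linarith
    · simp only [if_neg ht, norm_zero]; positivity
  · refine lt_of_le_of_lt (le_of_eq ?_) hn
    refine rho_congr_ae ρ ?_
    filter_upwards [hae] with t ht
    show (‖_‖₊ : ℝ≥0∞) = _
    simp only [Pi.sub_apply]
    by_cases hle : ‖f' t‖ ≤ (n : ℝ)
    · have htE : t ∉ E n := by
        simp only [hE, Set.mem_setOf_eq, not_lt]; exact hle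
      rw [Set.indicator_of_notMem htE, if_pos hle, ht, sub_self]
      simp
    · have htE : t ∈ E n := by
        simp only [hE, Set.mem_setOf_eq]; exact not_le.1 hle
      rw [Set.indicator_of_mem htE, if_neg hle, ht, sub_zero]


/-! ### Clamping -/

def cl (M x : ℝ) : ℝ := max (-M) (min M x)

lemma cl_lip (M a b : ℝ) : |cl M a - cl M b| ≤ |a - b| := by
  unfold cl
  rw [max_comm (-M) (min M a), max_comm (-M) (min M b)]
  refine le_trans (abs_max_sub_max_le_abs _ _ _) ?_
  refine le_trans (abs_min_sub_min_le_max M a M b) ?_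
  simp

lemma cl_fix (M b : ℝ) (h : |b| ≤ M) : cl M b = b := by
  unfold cl
  rw [min_eq_right (abs_le.1 h).2, max_eq_right (abs_le.1 h).1]

lemma cl_abs_le (M x : ℝ) (hM : 0 ≤ M) : |cl M x| ≤ M := by
  unfold cl
  rw [abs_le]
  constructor
  · exact le_max_left _ _
  · exact max_le (by linarith) (min_le_left _ _)

def clC (M : ℝ) (z : ℂ) : ℂ := (cl M z.re : ℂ) + (cl M z.im : ℂ) * Complex.I

lemma clC_re (M : ℝ) (z : ℂ) : (clC M z).re = cl M z.re := by simp [clC]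

lemma clC_im (M : ℝ) (z : ℂ) : (clC M z).im = cl M z.im := by simp [clC]

lemma cl_cont (M : ℝ) : Continuous (cl M) := by
  unfold cl
  exact continuous_const.max (continuous_const.min continuous_id)

lemma clC_cont (M : ℝ) : Continuous (clC M) := by
  unfold clC
  exact (Complex.continuous_ofReal.comp ((cl_cont M).comp Complex.continuous_re)).add
    ((Complex.continuous_ofReal.comp ((cl_cont M).comp Complex.continuous_im)).mul
      continuous_const)

lemma clC_norm_le (M : ℝ) (hM : 0 ≤ M) (z : ℂ) : ‖clC M z‖ ≤ 2 * M := by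
  refine le_trans (Complex.norm_le_abs_re_add_abs_im _) ?_
  rw [clC_re, clC_im]
  have h1 := cl_abs_le M z.re hM
  have h2 := cl_abs_le M z.im hM
  linarith

lemma clC_dist (M : ℝ) (z w : ℂ) (hw : ‖w‖ ≤ M) : ‖clC M z - w‖ ≤ ‖z - w‖ := by
  have hwre : |w.re| ≤ M := le_trans (Complex.abs_re_le_norm w) hw
  have hwim : |w.im| ≤ M := le_trans (Complex.abs_im_le_norm w) hw
  have hr : |(clC M z - w).re| ≤ |(z - w).re| := by
    rw [Complex.sub_re, Complex.sub_re, clC_re]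
    calc |cl M z.re - w.re| = |cl M z.re - cl M w.re| := by rw [cl_fix M w.re hwre]
    _ ≤ |z.re - w.re| := cl_lip M z.re w.re
  have hi : |(clC M z - w).im| ≤ |(z - w).im| := by
    rw [Complex.sub_im, Complex.sub_im, clC_im]
    calc |cl M z.im - w.im| = |cl M z.im - cl M w.im| := by rw [cl_fix M w.im hwim]
    _ ≤ |z.im - w.im| := cl_lip M z.im w.im
  rw [Complex.norm_def, Complex.norm_def]
  refine Real.sqrt_le_sqrt ?_
  rw [Complex.normSq_apply, Complex.normSq_apply]
  have h1 : (clC M z - w).re * (clC M z - w).re ≤ (z - w).re * (z - w).re := by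
    rw [← abs_mul_abs_self, ← abs_mul_abs_self ((z-w).re)]
    exact mul_self_le_mul_self (abs_nonneg _) hr
  have h2 : (clC M z - w).im * (clC M z - w).im ≤ (z - w).im * (z - w).im := by
    rw [← abs_mul_abs_self, ← abs_mul_abs_self ((z-w).im)]
    exact mul_self_le_mul_self (abs_nonneg _) hi
  linarith


/-- Bounded measurable functions are approximated by continuous functions in X. -/
lemma cont_approx (hsep : ρ.Separable) (fb : UC → ℂ) (M : ℝ) (hM : 0 < M)
    (hmb : Measurable fb) (hb : ∀ t, ‖fb t‖ ≤ M) (ε : ℝ≥0∞) (hε : 0 < ε) :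
    ∃ g : UC → ℂ, Continuous g ∧ ρ.N (fb - g) < ε := by
  set ε' : ℝ≥0∞ := min ε 1 with hε'def
  have hε'pos : 0 < ε' := lt_min hε zero_lt_one
  have hε'ne : ε' ≠ 0 := hε'pos.ne'
  have hε'top : ε' ≠ ⊤ := (lt_of_le_of_lt (min_le_right _ _) (by norm_num)).ne
  have hε'le : ε' ≤ ε := min_le_left _ _
  set εq : ℝ≥0∞ := ε' / 2 / 2 with hεq
  have hεqpos : 0 < εq := by
    refine ENNReal.div_pos ?_ (by norm_num)
    exact (ENNReal.div_pos hε'ne (by norm_num)).ne'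
  have hεqtop : εq ≠ ⊤ := by
    refine ne_of_lt (lt_of_le_of_lt ?_ (lt_top_iff_ne_top.2 hε'top))
    calc ε' / 2 / 2 ≤ ε' / 2 := ENNReal.half_le_self
    _ ≤ ε' := ENNReal.half_le_self
  set ρ1 : ℝ≥0∞ := ρ.ρ (fun _ => 1) with hρ1def
  have hρ1top : ρ1 ≠ ⊤ := (rho_one_lt_top ρ).ne
  -- choose η
  obtain ⟨η, hηpos, hηρ⟩ : ∃ η : ℝ≥0, 0 < η ∧ (η : ℝ≥0∞) * ρ1 ≤ εq := by
    by_cases hz : ρ1 = 0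
    · exact ⟨1, one_pos, by rw [hz, mul_zero]; exact zero_le⟩
    · have hbpos : 0 < εq / ρ1 := ENNReal.div_pos hεqpos.ne' hρ1top
      obtain ⟨r, hr1, hr2⟩ := ENNReal.lt_iff_exists_nnreal_btwn.1 hbpos
      refine ⟨r, by exact_mod_cast hr1, ?_⟩
      calc (r : ℝ≥0∞) * ρ1 ≤ (εq / ρ1) * ρ1 := mul_le_mul_left hr2.le _
      _ = εq := ENNReal.div_mul_cancel hz hρ1top
  -- the constant K = 3M
  set Mn : ℝ≥0 := ⟨M, hM.le⟩ with hMn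
  have hMnpos : 0 < Mn := hM
  set K : ℝ≥0 := 3 * Mn with hK
  have hKne : (K : ℝ≥0∞) ≠ 0 := by
    simp only [hK, ne_eq, ENNReal.coe_eq_zero]
    positivity
  have hKtop : (K : ℝ≥0∞) ≠ ⊤ := ENNReal.coe_ne_top
  -- choose δ
  obtain ⟨δ, hδpos, hδ⟩ := small ρ hsep (εq / (K : ℝ≥0∞))
    (ENNReal.div_pos hεqpos.ne' hKtop)
  set δ' : ℝ≥0∞ := min δ 1 with hδ'def
  have hδ'pos : 0 < δ' := lt_min hδpos zero_lt_one
  have hδ'top : δ' ≠ ⊤ := (lt_of_le_of_lt (min_le_right _ _) (by norm_num)).ne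
  -- approximate in L¹
  have hint : Integrable fb m := by
    refine (integrable_const M).mono' hmb.aestronglyMeasurable ?_
    exact Filter.Eventually.of_forall hb
  set β : ℝ≥0∞ := (η : ℝ≥0∞) * (δ' / 2) with hβ
  have hβne : β ≠ 0 := by
    refine mul_ne_zero (by exact_mod_cast hηpos.ne') ?_
    exact (ENNReal.div_pos hδ'pos.ne' (by norm_num)).ne'
  obtain ⟨g₀, hg₀int, _⟩ := hint.exists_boundedContinuous_lintegral_sub_le (μ := m) hβne
  set g : UC → ℂ := fun t => clC M (g₀ t) with hg
  have hgcont : Continuous g := (clC_cont M).comp g₀.continuous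
  have hpt1 : ∀ t, ‖fb t - g t‖ ≤ ‖fb t - g₀ t‖ := by
    intro t
    rw [norm_sub_rev, norm_sub_rev (fb t)]
    exact clC_dist M (g₀ t) (fb t) (hb t)
  -- the bad set
  set A : Set UC := {t | (η : ℝ≥0∞) ≤ (‖fb t - g t‖₊ : ℝ≥0∞)} with hA
  have hAmble : Measurable fun t => (‖fb t - g t‖₊ : ℝ≥0∞) :=
    (hmb.sub hgcont.measurable).nnnorm.coe_nnreal_ennreal
  have hAmeas : MeasurableSet A := measurableSet_le measurable_const hAmble
  have hmarkov : (η : ℝ≥0∞) * m A ≤ β := by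
    calc (η : ℝ≥0∞) * m A ≤ ∫⁻ t, (‖fb t - g t‖₊ : ℝ≥0∞) ∂m :=
      mul_meas_ge_le_lintegral₀ hAmble.aemeasurable _
    _ ≤ ∫⁻ t, (‖fb t - g₀ t‖₊ : ℝ≥0∞) ∂m := by
        refine lintegral_mono fun t => ?_
        refine ENNReal.coe_le_coe.2 ?_
        rw [← NNReal.coe_le_coe]
        simpa [coe_nnnorm] using hpt1 t
    _ ≤ β := hg₀int
  have hmA : m A < δ := by
    have h1 : m A ≤ δ' / 2 :=
      (ENNReal.mul_le_mul_iff_right (a := (η : ℝ≥0∞))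
        (by exact_mod_cast hηpos.ne') ENNReal.coe_ne_top).1 hmarkov
    calc m A ≤ δ' / 2 := h1
    _ < δ' := ENNReal.half_lt_self hδ'pos.ne' hδ'top
    _ ≤ δ := min_le_left _ _
  have hρA : ρ.ρ (fun t => A.indicator (fun _ => (1 : ℝ≥0∞)) t) < εq / (K : ℝ≥0∞) :=
    hδ A hAmeas hmA
  -- pointwise bound
  set F1 : UC → ℝ≥0∞ := fun _ => (η : ℝ≥0∞) with hF1
  set F2 : UC → ℝ≥0∞ := fun t => (K : ℝ≥0∞) * A.indicator (fun _ => (1 : ℝ≥0∞)) t with hF2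
  have hpt2 : ∀ t, (‖(fb - g) t‖₊ : ℝ≥0∞) ≤ (F1 + F2) t := by
    intro t
    simp only [Pi.add_apply, Pi.sub_apply, hF1, hF2]
    by_cases htA : t ∈ A
    · rw [Set.indicator_of_mem htA, mul_one]
      have hb1 : ‖fb t - g t‖ ≤ (K : ℝ) := by
        have h2M := clC_norm_le M hM.le (g₀ t)
        have : ‖fb t - g t‖ ≤ ‖fb t‖ + ‖g t‖ := norm_sub_le _ _
        have hKr : (K : ℝ) = 3 * M := by
          rw [hK]; push_cast; rw [hMn]; rfl
        rw [hKr]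
        have := hb t
        simp only [hg] at *
        linarith
      have : ‖fb t - g t‖₊ ≤ K := by
        rw [← NNReal.coe_le_coe]; simpa [coe_nnnorm] using hb1
      calc (‖fb t - g t‖₊ : ℝ≥0∞) ≤ (K : ℝ≥0∞) := by exact_mod_cast this
      _ ≤ (η : ℝ≥0∞) + (K : ℝ≥0∞) := le_add_self
    · rw [Set.indicator_of_notMem htA, mul_zero, add_zero]
      exact le_of_not_ge (fun hc => htA hc)
  -- assemble
  refine ⟨g, hgcont, ?_⟩
  have hstep : ρ.N (fb - g) ≤ (η : ℝ≥0∞) * ρ1 + (K : ℝ≥0∞) *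
      ρ.ρ (fun t => A.indicator (fun _ => (1 : ℝ≥0∞)) t) := by
    refine le_trans (rho_mono ρ hpt2) ?_
    refine le_trans (ρ.triangle F1 F2) ?_
    gcongr
    · exact le_of_eq (rho_const ρ η)
    · exact le_of_eq (ρ.smul_eq _ K)
  have h2 : (K : ℝ≥0∞) * ρ.ρ (fun t => A.indicator (fun _ => (1 : ℝ≥0∞)) t) < εq := by
    calc (K : ℝ≥0∞) * ρ.ρ (fun t => A.indicator (fun _ => (1 : ℝ≥0∞)) t)
        < (K : ℝ≥0∞) * (εq / (K : ℝ≥0∞)) :=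
          (ENNReal.mul_lt_mul_iff_right hKne hKtop).2 hρA
    _ = εq := ENNReal.mul_div_cancel hKne hKtop
  have hfinal : (η : ℝ≥0∞) * ρ1 +
      (K : ℝ≥0∞) * ρ.ρ (fun t => A.indicator (fun _ => (1 : ℝ≥0∞)) t) < ε' := by
    have h3 := ENNReal.add_lt_add_of_le_of_lt
      (ne_of_lt (lt_of_le_of_lt hηρ (lt_top_iff_ne_top.2 hεqtop))) hηρ h2
    calc (η : ℝ≥0∞) * ρ1 + (K : ℝ≥0∞) * ρ.ρ (fun t => A.indicator (fun _ => (1 : ℝ≥0∞)) t)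
        < εq + εq := h3
    _ = ε' / 2 := by rw [hεq, ENNReal.add_halves]
    _ ≤ ε' := ENNReal.half_le_self
  exact lt_of_le_of_lt hstep (lt_of_lt_of_le hfinal hε'le)


/-- Continuous functions are approximated by trigonometric polynomials in X. -/
lemma trig_approx (g : UC → ℂ) (hg : Continuous g) (ε : ℝ≥0∞) (hε : 0 < ε) :
    ∃ p ∈ TrigPoly, ρ.N (g - p) < ε := by
  set ε' : ℝ≥0∞ := min ε 1 with hε'def
  have hε'pos : 0 < ε' := lt_min hε zero_lt_one
  have hε'ne : ε' ≠ 0 := hε'pos.ne'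
  have hε'top : ε' ≠ ⊤ := (lt_of_le_of_lt (min_le_right _ _) (by norm_num)).ne
  have hε'le : ε' ≤ ε := min_le_left _ _
  set ρ1 : ℝ≥0∞ := ρ.ρ (fun _ => 1) with hρ1def
  have hρ1top : ρ1 ≠ ⊤ := (rho_one_lt_top ρ).ne
  have hhalfpos : 0 < ε' / 2 := ENNReal.div_pos hε'ne (by norm_num)
  obtain ⟨η, hηpos, hηρ⟩ : ∃ η : ℝ≥0, 0 < η ∧ (η : ℝ≥0∞) * ρ1 ≤ ε' / 2 := by
    by_cases hz : ρ1 = 0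
    · exact ⟨1, one_pos, by rw [hz, mul_zero]; exact zero_le⟩
    · obtain ⟨r, hr1, hr2⟩ := ENNReal.lt_iff_exists_nnreal_btwn.1
        (ENNReal.div_pos hhalfpos.ne' hρ1top)
      refine ⟨r, by exact_mod_cast hr1, ?_⟩
      calc (r : ℝ≥0∞) * ρ1 ≤ (ε' / 2 / ρ1) * ρ1 := mul_le_mul_left hr2.le _
      _ = ε' / 2 := ENNReal.div_mul_cancel hz hρ1top
  -- Stone–Weierstrass
  set G : C(UC, ℂ) := ⟨g, hg⟩ with hG
  have hdense : Dense ((Submodule.span ℂ (Set.range (@fourier (2 * π)))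
      : Submodule ℂ C(UC, ℂ)) : Set C(UC, ℂ)) := by
    rw [dense_iff_closure_eq, ← Submodule.topologicalClosure_coe, span_fourier_closure_eq_top]
    rfl
  have hηr : (0 : ℝ) < (η : ℝ) := hηpos
  obtain ⟨P, hPmem, hPdist⟩ := Metric.mem_closure_iff.1 (hdense G) (η : ℝ) hηr
  obtain ⟨c, hc⟩ := Finsupp.mem_span_range_iff_exists_finsupp.1 hPmem
  set n : ℕ := c.support.sup Int.natAbs with hn
  set p : UC → ℂ := fun x => ∑ k ∈ Finset.Icc (-(n : ℤ)) (n : ℤ), c k * fourier k x with hp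
  have hptrig : p ∈ TrigPoly := ⟨n, fun k => c k, rfl⟩
  have hPeval : ∀ x : UC, P x = p x := by
    intro x
    rw [← hc]
    rw [Finsupp.sum]
    have h1 : ((∑ k ∈ c.support, c k • fourier k : C(UC, ℂ))) x
        = ∑ k ∈ c.support, c k * fourier k x := by simp
    rw [h1, hp]
    refine Finset.sum_subset ?_ ?_
    · intro k hk
      have h2 : k.natAbs ≤ n := Finset.le_sup hk
      rw [Finset.mem_Icc]
      have h3 : k.natAbs ≤ n := h2
      omega
    · intro k _ hk
      rw [Finsupp.notMem_support_iff.1 hk, zero_mul]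
  refine ⟨p, hptrig, ?_⟩
  have hbound : ∀ t, (‖(g - p) t‖₊ : ℝ≥0∞) ≤ (η : ℝ≥0∞) := by
    intro t
    have h1 : ‖g t - p t‖ ≤ (η : ℝ) := by
      have h2 : g t - p t = (G - P) t := by
        simp only [ContinuousMap.sub_apply, hG, ContinuousMap.coe_mk, hPeval t]
      rw [h2]
      refine le_trans ((G - P).norm_coe_le_norm t) ?_
      rw [← dist_eq_norm]
      exact hPdist.le
    refine ENNReal.coe_le_coe.2 ?_
    rw [← NNReal.coe_le_coe]
    simpa [coe_nnnorm] using h1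
  have hstep : ρ.N (g - p) ≤ (η : ℝ≥0∞) * ρ1 := by
    refine le_trans (rho_mono ρ hbound) ?_
    exact le_of_eq (rho_const ρ η)
  refine lt_of_le_of_lt (le_trans hstep hηρ) ?_
  exact lt_of_lt_of_le (ENNReal.half_lt_self hε'ne hε'top) hε'le

end BFAux

end

noncomputable section

theorem stmt6 (ρ : BFNorm) (hsep : ρ.Separable) : ρ.DenseIn TrigPoly := by
  intro f hf ε hε
  set ε' : ℝ≥0∞ := min ε 1 with hε'def
  have hε'pos : 0 < ε' := lt_min hε zero_lt_one
  have hε'ne : ε' ≠ 0 := hε'pos.ne'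
  have hε'top : ε' ≠ ⊤ := (lt_of_le_of_lt (min_le_right _ _) (by norm_num)).ne
  have hε'le : ε' ≤ ε := min_le_left _ _
  have hhalfpos : 0 < ε' / 2 := ENNReal.div_pos hε'ne (by norm_num)
  have hεqpos : 0 < ε' / 2 / 2 := ENNReal.div_pos hhalfpos.ne' (by norm_num)
  obtain ⟨M, fb, hM, hmb, hbb, h1⟩ := BFAux.trunc ρ hsep f hf (ε' / 2 / 2) hεqpos
  obtain ⟨g, hgc, h2⟩ := BFAux.cont_approx ρ hsep fb M hM hmb hbb (ε' / 2 / 2) hεqpos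
  obtain ⟨p, hptrig, h3⟩ := BFAux.trig_approx ρ g hgc (ε' / 2) hhalfpos
  refine ⟨p, hptrig, ?_⟩
  have htri : ρ.N (f - p) ≤ ρ.N (f - fb) + (ρ.N (fb - g) + ρ.N (g - p)) := by
    refine le_trans (BFAux.N_sub_triangle ρ f fb p) ?_
    exact add_le_add_right (BFAux.N_sub_triangle ρ fb g p) _
  have h12 : ρ.N (f - fb) + (ρ.N (fb - g) + ρ.N (g - p))
      < (ε' / 2 / 2 + ε' / 2 / 2) + ε' / 2 := by
    calc ρ.N (f - fb) + (ρ.N (fb - g) + ρ.N (g - p))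
        = (ρ.N (f - fb) + ρ.N (fb - g)) + ρ.N (g - p) := by ring
    _ < (ε' / 2 / 2 + ε' / 2 / 2) + ε' / 2 :=
        ENNReal.add_lt_add (ENNReal.add_lt_add h1 h2) h3
  rw [ENNReal.add_halves, ENNReal.add_halves] at h12
  exact lt_of_le_of_lt htri (lt_of_lt_of_le h12 hε'le)


end
end

section
/- Let X be a Banach function space on the unit circle. The following are equivalent: (a) the trigonometric polynomials are dense in X; (b) the continuous functions C(T) are dense in X; (c) X is separable. -/
open MeasureTheory Filter Real Set
open scoped ENNReal Topology NNReal

noncomputable section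

noncomputable section
namespace BFNorm
variable (ρ : BFNorm)

lemma rho_one_lt_top : ρ.ρ (fun _ => 1) < ⊤ := by
  have h := ρ.finite_indicator univ MeasurableSet.univ
  simpa [Set.indicator_univ, Pi.one_def] using h

variable {ρ}

lemma N_mono {f g : UC → ℂ} (h : ∀ᵐ t ∂m, ‖f t‖ ≤ ‖g t‖) : ρ.N f ≤ ρ.N g :=
  ρ.mono _ _ (h.mono fun t ht => by
    simpa [ENNReal.coe_le_coe] using (show ‖f t‖₊ ≤ ‖g t‖₊ from ht))

lemma N_congr {f g : UC → ℂ} (h : f =ᵐ[m] g) : ρ.N f = ρ.N g :=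
  le_antisymm (N_mono (h.mono fun _ ht => by rw [ht]))
    (N_mono (h.mono fun _ ht => by rw [ht]))

lemma N_add_le (f g : UC → ℂ) : ρ.N (f + g) ≤ ρ.N f + ρ.N g := by
  refine le_trans (ρ.mono _ ((fun t => (‖f t‖₊ : ℝ≥0∞)) + fun t => (‖g t‖₊ : ℝ≥0∞))
    (Filter.Eventually.of_forall fun t => ?_)) (ρ.triangle _ _)
  have : ‖f t + g t‖₊ ≤ ‖f t‖₊ + ‖g t‖₊ := nnnorm_add_le _ _
  simp only [Pi.add_apply]
  exact_mod_cast this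

lemma N_sub_le (f g h : UC → ℂ) : ρ.N (f - h) ≤ ρ.N (f - g) + ρ.N (g - h) := by
  have : f - h = (f - g) + (g - h) := by ring
  rw [this]; exact N_add_le _ _

lemma N_sub_rev (f g : UC → ℂ) : ρ.N (f - g) = ρ.N (g - f) := by
  unfold BFNorm.N
  congr 1; funext t
  simp only [Pi.sub_apply]
  rw [show f t - g t = -(g t - f t) by ring, nnnorm_neg]

lemma N_le_const {f : UC → ℂ} {C : ℝ≥0} (h : ∀ t, ‖f t‖₊ ≤ C) :
    ρ.N f ≤ C * ρ.ρ (fun _ => 1) := by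
  calc ρ.N f ≤ ρ.ρ (fun _ => (C : ℝ≥0∞)) :=
        ρ.mono _ _ (Filter.Eventually.of_forall fun t => by simpa [ENNReal.coe_le_coe] using h t)
    _ = C * ρ.ρ (fun _ => 1) := by
        simpa using ρ.smul_eq (fun _ => 1) C

lemma cont_mem {g : UC → ℂ} (hg : Continuous g) : ρ.mem g := by
  obtain ⟨x, _, hx⟩ := isCompact_univ.exists_isMaxOn ⟨(0:UC), mem_univ 0⟩ hg.norm.continuousOn
  refine ⟨hg.aestronglyMeasurable, lt_of_le_of_lt (N_le_const (C := ‖g x‖₊) fun y => hx (mem_univ y)) ?_⟩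
  exact ENNReal.mul_lt_top ENNReal.coe_lt_top ρ.rho_one_lt_top

lemma exists_nnreal_mul_lt {C : ℝ≥0∞} (hC : C ≠ ⊤) {ε : ℝ≥0∞} (hε : 0 < ε) :
    ∃ r : ℝ≥0, 0 < r ∧ (r : ℝ≥0∞) * C < ε := by
  rcases eq_or_ne ε ⊤ with rfl | hεt
  · exact ⟨1, one_pos, by simpa using hC.lt_top⟩
  set c := C.toNNReal
  set e := ε.toNNReal with he
  have he0 : 0 < e := ENNReal.toNNReal_pos hε.ne' hεt
  refine ⟨e / (2 * (c + 1)), by positivity, ?_⟩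
  have hCc : C = (c : ℝ≥0∞) := (ENNReal.coe_toNNReal hC).symm
  have hεe : ε = (e : ℝ≥0∞) := (ENNReal.coe_toNNReal hεt).symm
  rw [hCc, hεe, ← ENNReal.coe_mul, ENNReal.coe_lt_coe]
  have hd : (0:ℝ≥0) < 2 * (c + 1) := by positivity
  rw [div_mul_eq_mul_div, div_lt_iff₀ hd]
  calc e * c < e * (2 * (c + 1)) := by
        refine mul_lt_mul_of_pos_left ?_ he0
        calc c < c + 1 := lt_add_of_pos_right c one_pos
          _ ≤ 2 * (c + 1) := by
              rw [two_mul]; exact le_add_self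
    _ ≤ e * (2 * (c + 1)) := le_rfl

end BFNorm
end
noncomputable section
namespace BFNorm
variable {ρ : BFNorm}

/-- nnnorm of indicator. -/
lemma nn_indicator (f : UC → ℂ) (S : Set UC) :
    (fun t => (‖S.indicator f t‖₊ : ℝ≥0∞)) = S.indicator (fun t => (‖f t‖₊ : ℝ≥0∞)) := by
  funext t
  by_cases ht : t ∈ S <;> simp [Set.indicator_of_mem, Set.indicator_of_notMem, ht]

/-- Key lemma: separability implies absolutely continuous norm along decreasing
vanishing sequences of sets. -/
lemma sep_ac (hsep : ρ.Separable) {f : UC → ℂ} (hf : ρ.mem f)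
    (E : ℕ → Set UC) (hEm : ∀ n, MeasurableSet (E n))
    (hdec : ∀ n, E (n + 1) ⊆ E n)
    (hnull : ∀ᵐ t ∂m, ∃ n, t ∉ E n)
    {ε : ℝ≥0∞} (hε : 0 < ε) : ∃ n, ρ.N ((E n).indicator f) < ε := by
  set φ : UC → ℝ≥0∞ := fun t => (‖f t‖₊ : ℝ≥0∞) with hφ
  have hEanti : Antitone E := antitone_nat_of_succ_le hdec
  have hle : ∀ S : Set UC, ρ.N (S.indicator f) ≤ ρ.N f := fun S =>
    N_mono (Filter.Eventually.of_forall fun t => norm_indicator_le_norm_self f t)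
  rcases eq_or_ne ε ⊤ with rfl | hεt
  · exact ⟨0, (hle _).trans_lt hf.2⟩
  by_contra hcon
  push_neg at hcon
  have hhalf : ε / 2 < ε := ENNReal.half_lt_self hε.ne' hεt
  -- step: for every n there is j > 0 with large norm on the annulus
  have step : ∀ n : ℕ, ∃ j : ℕ, 0 < j ∧
      ε / 2 < ρ.ρ ((E n \ E (n + j)).indicator φ) := by
    intro n
    have hmono : ∀ j : ℕ, (fun t => (E n \ E (n + j)).indicator φ t) ≤ᵐ[m]
        fun t => (E n \ E (n + (j+1))).indicator φ t := by
      intro j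
      refine Filter.Eventually.of_forall fun t => ?_
      refine Set.indicator_le_indicator_of_subset ?_ (fun _ => zero_le) t
      exact Set.diff_subset_diff_right (hEanti (by omega))
    have hlim : ∀ᵐ t ∂m, Tendsto (fun j => (E n \ E (n + j)).indicator φ t) atTop
        (𝓝 ((E n).indicator φ t)) := by
      filter_upwards [hnull] with t ht
      obtain ⟨J, hJ⟩ := ht
      refine Tendsto.congr' ?_ tendsto_const_nhds
      filter_upwards [Filter.eventually_ge_atTop J] with j hj
      by_cases htn : t ∈ E n
      · have : t ∉ E (n + j) := fun hmem => hJ (hEanti (by omega) hmem)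
        rw [Set.indicator_of_mem htn, Set.indicator_of_mem (Set.mem_diff t |>.2 ⟨htn, this⟩)]
      · rw [Set.indicator_of_notMem htn, Set.indicator_of_notMem (fun h => htn h.1)]
    have hfat := ρ.fatou _ _ hmono hlim
    have hlow : ε / 2 < ρ.ρ ((E n).indicator φ) := by
      refine hhalf.trans_le ?_
      have := hcon n
      rwa [BFNorm.N, nn_indicator] at this
    have hev : ∀ᶠ j in atTop, ε / 2 < ρ.ρ ((E n \ E (n + j)).indicator φ) :=
      hfat.eventually (eventually_gt_nhds hlow)
    obtain ⟨j, hj⟩ := (hev.and (Filter.eventually_ge_atTop 1)).exists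
    exact ⟨j, by omega, hj.1⟩
  choose jfun hjpos hjbig using step
  -- sequence of indices
  let nseq : ℕ → ℕ := fun k => Nat.rec 0 (fun _ prev => prev + jfun prev) k
  have hnseq : ∀ k, nseq (k + 1) = nseq k + jfun (nseq k) := fun k => rfl
  have hnmono : StrictMono nseq := strictMono_nat_of_lt_succ fun k => by
    rw [hnseq]; exact Nat.lt_add_of_pos_right (hjpos _)
  set B : ℕ → Set UC := fun k => E (nseq k) \ E (nseq (k + 1)) with hB
  have hBbig : ∀ k, ε / 2 < ρ.ρ ((B k).indicator φ) := fun k => by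
    simpa [hB, hnseq] using hjbig (nseq k)
  have hBdisj : ∀ k l, k < l → Disjoint (B k) (B l) := by
    intro k l hkl
    refine Set.disjoint_left.2 fun t htk htl => ?_
    exact htk.2 (hEanti (hnmono.monotone (by omega : k + 1 ≤ l)) htl.1)
  have hBmeas : ∀ k, MeasurableSet (B k) := fun k => (hEm _).diff (hEm _)
  -- the uncountable family
  set S : Set ℕ → Set UC := fun A => ⋃ k ∈ A, B k with hS
  have hSmeas : ∀ A, MeasurableSet (S A) :=
    fun A => MeasurableSet.biUnion (Set.to_countable A) fun k _ => hBmeas k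
  set g : Set ℕ → UC → ℂ := fun A => (S A).indicator f with hg
  have hgmem : ∀ A, ρ.mem (g A) := fun A =>
    ⟨hf.1.indicator (hSmeas A), (hle _).trans_lt hf.2⟩
  have hsep' : ∀ A B' : Set ℕ, A ≠ B' → ε / 2 < ρ.N (g A - g B') := by
    intro A B' hAB
    -- a block in the symmetric difference
    have hsym : ∃ k, (k ∈ A ∧ k ∉ B') ∨ (k ∈ B' ∧ k ∉ A) := by
      by_contra hctr
      push_neg at hctr
      exact hAB (Set.ext fun k => ⟨fun h => (hctr k).1 h, fun h => (hctr k).2 h⟩)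
    have key : ∀ (A B' : Set ℕ) (k : ℕ), k ∈ A → k ∉ B' →
        ε / 2 < ρ.N (g A - g B') := by
      intro A B' k hkA hkB
      refine (hBbig k).trans_le (ρ.mono _ _ (Filter.Eventually.of_forall fun t => ?_))
      by_cases htk : t ∈ B k
      · have hA : t ∈ S A := Set.mem_biUnion hkA htk
        have hB' : t ∉ S B' := by
          rintro ⟨_, ⟨l, rfl⟩, hmem⟩
          simp only [Set.mem_iUnion, exists_prop] at hmem
          obtain ⟨hl, htl⟩ := hmem
          rcases lt_trichotomy k l with h | rfl | h
          · exact (Set.disjoint_left.1 (hBdisj k l h) htk) htl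
          · exact hkB hl
          · exact (Set.disjoint_left.1 (hBdisj l k h) htl) htk
        have : (g A - g B') t = f t := by
          simp [hg, Pi.sub_apply, Set.indicator_of_mem hA, Set.indicator_of_notMem hB']
        rw [Set.indicator_of_mem htk]
        show φ t ≤ (‖(g A - g B') t‖₊ : ℝ≥0∞)
        rw [this]
      · rw [Set.indicator_of_notMem htk]
        exact zero_le
    obtain ⟨k, hk | hk⟩ := hsym
    · exact key A B' k hk.1 hk.2
    · rw [N_sub_rev]; exact key B' A k hk.1 hk.2
  -- use separability to contradict
  obtain ⟨D, hDcount, _, hDdense⟩ := hsep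
  have hε4 : (0:ℝ≥0∞) < ε / 4 := ENNReal.div_pos hε.ne' (by norm_num)
  have hchoice : ∀ A : Set ℕ, ∃ d, d ∈ D ∧ ρ.N (g A - d) < ε / 4 := by
    intro A
    obtain ⟨d, hd, hnd⟩ := hDdense (g A) (hgmem A) (ε / 4) hε4
    exact ⟨d, hd, hnd⟩
  choose c hcD hcN using hchoice
  have hninj : ¬ Function.Injective c := by
    intro hinj
    haveI : Countable D := hDcount.to_subtype
    obtain ⟨enc, henc⟩ := exists_injective_nat ↥D
    have : Function.Injective (fun A : Set ℕ => enc ⟨c A, hcD A⟩) := by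
      intro A A' h
      exact hinj (congrArg Subtype.val (henc h))
    exact Function.cantor_injective _ this
  obtain ⟨A, A', hcc, hAA⟩ := Function.not_injective_iff.1 hninj
  have hlt : ρ.N (g A - g A') < ε / 2 := by
    have h1 := hcN A
    have h2 := hcN A'
    have : ρ.N (g A - g A') ≤ ρ.N (g A - c A) + ρ.N (c A' - g A') := by
      rw [hcc]; exact N_sub_le _ _ _
    rw [N_sub_rev (c A') (g A')] at this
    calc ρ.N (g A - g A') ≤ _ := this
      _ < ε / 4 + ε / 4 := ENNReal.add_lt_add h1 h2
      _ = ε / 2 := by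
          have h22 : ((2:ℝ≥0∞))⁻¹ * 2⁻¹ = 4⁻¹ := by
            rw [← ENNReal.mul_inv (Or.inl two_ne_zero) (Or.inl ENNReal.ofNat_ne_top)]
            norm_num
          rw [← ENNReal.add_halves (ε / 2)]
          congr 1 <;>
            rw [div_eq_mul_inv, div_eq_mul_inv, div_eq_mul_inv, mul_assoc, h22]
  exact absurd hlt (not_lt.2 (hsep' A A' hAA).le)

end BFNorm
end
noncomputable section
namespace BFNorm
variable {ρ : BFNorm}

lemma sep_indicator_small (hsep : ρ.Separable) {ε : ℝ≥0∞} (hε : 0 < ε) :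
    ∃ δ : ℝ≥0∞, 0 < δ ∧ ∀ E : Set UC, MeasurableSet E → m E < δ →
      ρ.ρ (E.indicator 1) < ε := by
  by_contra hcon
  push_neg at hcon
  have hpick : ∀ k : ℕ, ∃ E : Set UC, MeasurableSet E ∧ m E < (2:ℝ≥0∞)⁻¹ ^ k ∧
      ε ≤ ρ.ρ (E.indicator 1) := by
    intro k
    obtain ⟨E, hEm, hEsmall, hEbig⟩ := hcon ((2:ℝ≥0∞)⁻¹ ^ k)
      (ENNReal.pow_pos (ENNReal.inv_pos.2 ENNReal.ofNat_ne_top) k)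
    exact ⟨E, hEm, hEsmall, hEbig⟩
  choose Es hEsm hEssmall hEsbig using hpick
  set F : ℕ → Set UC := fun n => ⋃ k, Es (n + k) with hF
  have hFm : ∀ n, MeasurableSet (F n) := fun n => MeasurableSet.iUnion fun k => hEsm _
  have hFdec : ∀ n, F (n + 1) ⊆ F n := by
    intro n t ht
    obtain ⟨_, ⟨k, rfl⟩, htk⟩ := ht
    exact Set.mem_iUnion.2 ⟨k + 1, by rwa [show n + (k+1) = n + 1 + k by omega]⟩
  have hFbound : ∀ n, m (F n) ≤ (2:ℝ≥0∞)⁻¹ ^ n * 2 := by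
    intro n
    calc m (F n) ≤ ∑' k, m (Es (n + k)) := measure_iUnion_le _
      _ ≤ ∑' k, (2:ℝ≥0∞)⁻¹ ^ (n + k) := ENNReal.tsum_le_tsum fun k => (hEssmall _).le
      _ = (2:ℝ≥0∞)⁻¹ ^ n * ∑' k, (2:ℝ≥0∞)⁻¹ ^ k := by
          rw [← ENNReal.tsum_mul_left]
          exact tsum_congr fun k => pow_add _ n k
      _ = (2:ℝ≥0∞)⁻¹ ^ n * 2 := by
          rw [ENNReal.tsum_geometric, ENNReal.one_sub_inv_two, inv_inv]
  have hIntzero : m (⋂ n, F n) = 0 := by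
    have htnd : Tendsto (fun n => (2:ℝ≥0∞)⁻¹ ^ n * 2) atTop (𝓝 0) := by
      have h1 : Tendsto (fun n : ℕ => (2:ℝ≥0∞)⁻¹ ^ n) atTop (𝓝 0) :=
        ENNReal.tendsto_pow_atTop_nhds_zero_of_lt_one ENNReal.one_half_lt_one
      have h2 := ENNReal.Tendsto.mul_const h1 (Or.inr (ENNReal.ofNat_ne_top : (2:ℝ≥0∞) ≠ ⊤))
      simpa using h2
    have hle : ∀ n, m (⋂ i, F i) ≤ (2:ℝ≥0∞)⁻¹ ^ n * 2 := fun n =>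
      le_trans (measure_mono (Set.iInter_subset _ n)) (hFbound n)
    exact le_antisymm (ge_of_tendsto' htnd hle) zero_le
  have hnull : ∀ᵐ t ∂m, ∃ n, t ∉ F n := by
    rw [MeasureTheory.ae_iff]
    push_neg
    simpa [Set.setOf_forall] using hIntzero
  obtain ⟨n, hn⟩ := sep_ac hsep (cont_mem (continuous_const : Continuous fun _ : UC => (1:ℂ)))
    F hFm hFdec hnull hε
  have hsub : Es n ⊆ F n := fun t ht => Set.mem_iUnion.2 ⟨0, by simpa using ht⟩
  have : ε ≤ ρ.N ((F n).indicator fun _ => (1:ℂ)) := by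
    refine le_trans (hEsbig n) ?_
    rw [BFNorm.N, nn_indicator]
    refine ρ.mono _ _ (Filter.Eventually.of_forall fun t => ?_)
    have h1 : (fun t : UC => (‖(1:ℂ)‖₊ : ℝ≥0∞)) = (1 : UC → ℝ≥0∞) := by
      funext t; simp
    rw [h1]
    exact Set.indicator_le_indicator_of_subset hsub (fun _ => zero_le) t
  exact absurd hn (not_lt.2 this)

end BFNorm
end
noncomputable section

instance : IsProbabilityMeasure m := by unfold m; infer_instance
instance : (m).WeaklyRegular := by unfold m; infer_instance

/-- real clamp to `[-M, M]`. -/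
def clampR (M x : ℝ) : ℝ := max (-M) (min M x)

lemma clampR_eq_self {M y : ℝ} (h : |y| ≤ M) : clampR M y = y := by
  obtain ⟨h1, h2⟩ := abs_le.1 h
  rw [clampR, min_eq_right h2, max_eq_right h1]

lemma clampR_lip (M x y : ℝ) : |clampR M x - clampR M y| ≤ |x - y| := by
  unfold clampR
  calc |max (-M) (min M x) - max (-M) (min M y)| ≤ |min M x - min M y| := by
        simpa [max_comm] using abs_max_sub_max_le_abs (min M x) (min M y) (-M)
    _ ≤ |x - y| := by
        simpa [max_self] using abs_min_sub_min_le_max M x M y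

lemma abs_clampR {M x : ℝ} (hM : 0 ≤ M) : |clampR M x| ≤ M := by
  rw [abs_le, clampR]
  constructor
  · exact le_max_left _ _
  · exact max_le (by linarith) (min_le_left _ _)

/-- complex clamp: clamp real and imaginary parts. -/
def clampC (M : ℝ) (z : ℂ) : ℂ := (clampR M z.re : ℂ) + (clampR M z.im : ℂ) * Complex.I

lemma clampC_re (M : ℝ) (z : ℂ) : (clampC M z).re = clampR M z.re := by simp [clampC]
lemma clampC_im (M : ℝ) (z : ℂ) : (clampC M z).im = clampR M z.im := by simp [clampC]

lemma clampC_continuous (M : ℝ) : Continuous (clampC M) := by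
  have hcl : Continuous (clampR M) := continuous_const.max (continuous_const.min continuous_id)
  exact ((Complex.continuous_ofReal.comp (hcl.comp Complex.continuous_re)).add
    ((Complex.continuous_ofReal.comp (hcl.comp Complex.continuous_im)).mul continuous_const))

lemma norm_clampC {M : ℝ} (hM : 0 ≤ M) (z : ℂ) : ‖clampC M z‖ ≤ 2 * M := by
  calc ‖clampC M z‖ ≤ |(clampC M z).re| + |(clampC M z).im| := by
        exact Complex.norm_le_abs_re_add_abs_im _
    _ ≤ M + M := by
        rw [clampC_re, clampC_im]
        exact add_le_add (abs_clampR hM) (abs_clampR hM)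
    _ = 2 * M := by ring

lemma clampC_norm_sub_le {M : ℝ} (z w : ℂ) (hw : ‖w‖ ≤ M) :
    ‖clampC M z - w‖ ≤ ‖z - w‖ := by
  have hre : |w.re| ≤ M := (Complex.abs_re_le_norm w).trans hw
  have him : |w.im| ≤ M := (Complex.abs_im_le_norm w).trans hw
  have h1 : |clampR M z.re - w.re| ≤ |z.re - w.re| := by
    conv_lhs => rw [show w.re = clampR M w.re from (clampR_eq_self hre).symm]
    exact clampR_lip M _ _
  have h2 : |clampR M z.im - w.im| ≤ |z.im - w.im| := by
    conv_lhs => rw [show w.im = clampR M w.im from (clampR_eq_self him).symm]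
    exact clampR_lip M _ _
  rw [Complex.norm_def, Complex.norm_def,
    Complex.normSq_apply, Complex.normSq_apply]
  apply Real.sqrt_le_sqrt
  simp only [Complex.sub_re, Complex.sub_im, clampC_re, clampC_im]
  have e1 : ∀ a : ℝ, a * a = |a| ^ 2 := fun a => by rw [sq_abs]; ring
  rw [e1, e1, e1, e1]
  exact add_le_add (pow_le_pow_left₀ (abs_nonneg _) h1 2) (pow_le_pow_left₀ (abs_nonneg _) h2 2)

end
noncomputable section
namespace BFNorm
variable {ρ : BFNorm}

lemma sep_dense_cont (hsep : ρ.Separable) : ρ.DenseIn {f : UC → ℂ | Continuous f} := by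
  intro f hf ε hε
  rcases eq_or_ne ε ⊤ with rfl | hεt
  · refine ⟨0, continuous_zero, ?_⟩
    rw [sub_zero]
    exact hf.2.trans_le le_top
  have hε3 : (0:ℝ≥0∞) < ε / 3 := ENNReal.div_pos hε.ne' (by norm_num)
  -- strongly measurable representative
  set f' := hf.1.mk f with hf'def
  have hf'sm : StronglyMeasurable f' := hf.1.stronglyMeasurable_mk
  have hff' : f =ᵐ[m] f' := hf.1.ae_eq_mk
  have hf'mem : ρ.mem f' := ⟨hf'sm.aestronglyMeasurable, by rw [← N_congr hff']; exact hf.2⟩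
  -- truncation
  set E : ℕ → Set UC := fun n => {t | (n:ℝ) < ‖f' t‖} with hE
  have hEm : ∀ n, MeasurableSet (E n) :=
    fun n => measurableSet_lt measurable_const hf'sm.measurable.norm
  have hdec : ∀ n, E (n+1) ⊆ E n := by
    intro n t ht
    simp only [hE, Set.mem_setOf_eq] at *
    push_cast at ht ⊢
    linarith
  have hnull : ∀ᵐ t ∂m, ∃ n, t ∉ E n := by
    refine Filter.Eventually.of_forall fun t => ?_
    obtain ⟨n, hn⟩ := exists_nat_ge ‖f' t‖
    exact ⟨n, fun hc => not_lt.2 hn hc⟩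
  obtain ⟨M, hM⟩ := sep_ac hsep hf'mem E hEm hdec hnull hε3
  set h : UC → ℂ := (E M)ᶜ.indicator f' with hh
  have hfh : f' - h = (E M).indicator f' := by
    funext t
    by_cases ht : t ∈ E M <;>
      simp [hh, Pi.sub_apply, Set.indicator_of_mem, Set.indicator_of_notMem, ht]
  have h1 : ρ.N (f' - h) < ε / 3 := by rw [hfh]; exact hM
  have hbd : ∀ t, ‖h t‖ ≤ (M:ℝ) := by
    intro t
    by_cases ht : t ∈ E M
    · rw [hh, Set.indicator_of_notMem (by simpa using ht)]
      simp [Nat.cast_nonneg]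
    · rw [hh, Set.indicator_of_mem (by simpa using ht)]
      have : ¬ ((M:ℝ) < ‖f' t‖) := ht
      linarith [not_lt.1 this]
  have hsm : StronglyMeasurable h := hf'sm.indicator (hEm M).compl
  have hint : Integrable h m :=
    ⟨hsm.aestronglyMeasurable, HasFiniteIntegral.of_bounded (C := (M:ℝ))
      (Filter.Eventually.of_forall hbd)⟩
  -- constants
  obtain ⟨r, hr0, hrρ⟩ := exists_nnreal_mul_lt (ρ.rho_one_lt_top).ne hε3
  set cM : ℝ≥0 := 3 * (M + 1) with hcM
  have hcM0 : (cM : ℝ≥0∞) ≠ 0 := by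
    simp only [hcM, ne_eq, ENNReal.coe_eq_zero]
    positivity
  have hεM : (0:ℝ≥0∞) < ε / 3 / cM := ENNReal.div_pos hε3.ne' ENNReal.coe_ne_top
  obtain ⟨δ₀, hδ₀, hδsmall⟩ := sep_indicator_small hsep hεM
  set δ := min δ₀ 1 with hδdef
  have hδ0 : (0:ℝ≥0∞) < δ := lt_min hδ₀ one_pos
  have hδt : δ ≠ ⊤ := by
    simp only [hδdef, ne_eq, min_eq_top, not_and_or]
    exact Or.inr (by simp)
  set κ := (r : ℝ≥0∞) * δ / 2 with hκ
  have hκ0 : κ ≠ 0 := by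
    simp only [hκ, ne_eq, ENNReal.div_eq_zero_iff, mul_eq_zero, ENNReal.coe_eq_zero,
      ENNReal.ofNat_ne_top, or_false]
    push_neg
    exact ⟨fun hc => absurd hc (by exact mod_cast hr0.ne'), hδ0.ne'⟩
  obtain ⟨g₀, hg₀le, _⟩ := hint.exists_boundedContinuous_lintegral_sub_le hκ0
  set E' : Set UC := {t | (r:ℝ) < ‖h t - g₀ t‖} with hE'
  have hE'm : MeasurableSet E' :=
    measurableSet_lt measurable_const ((hsm.sub g₀.continuous.stronglyMeasurable).measurable).norm
  have hmE' : m E' < δ := by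
    have hmeas : AEMeasurable (fun t => (‖h t - g₀ t‖₊ : ℝ≥0∞)) m :=
      ((hsm.sub g₀.continuous.stronglyMeasurable).measurable).nnnorm.coe_nnreal_ennreal.aemeasurable
    have hcheb := mul_meas_ge_le_lintegral₀ hmeas (r : ℝ≥0∞)
    have hsub : E' ⊆ {t | (r:ℝ≥0∞) ≤ (‖h t - g₀ t‖₊ : ℝ≥0∞)} := by
      intro t ht
      simp only [hE', Set.mem_setOf_eq] at ht ⊢
      rw [ENNReal.coe_le_coe, ← NNReal.coe_le_coe, coe_nnnorm]
      exact ht.le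
    have hle2 : (r:ℝ≥0∞) * m E' ≤ κ :=
      le_trans (mul_le_mul_right (measure_mono hsub) _) (hcheb.trans hg₀le)
    have : m E' ≤ δ / 2 := by
      rw [hκ, mul_div_assoc] at hle2
      exact (ENNReal.mul_le_mul_iff_right (by exact_mod_cast hr0.ne') ENNReal.coe_ne_top).1 hle2
    exact this.trans_lt (ENNReal.half_lt_self hδ0.ne' hδt)
  set g' : UC → ℂ := fun t => clampC (M:ℝ) (g₀ t) with hg'
  have hg'cont : Continuous g' := (clampC_continuous (M:ℝ)).comp g₀.continuous
  -- pointwise bound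
  have hpt : ∀ t, (‖(h - g') t‖₊ : ℝ≥0∞) ≤
      ((r:ℝ≥0∞) + (cM : ℝ≥0∞) * E'.indicator 1 t) := by
    intro t
    by_cases ht : t ∈ E'
    · have hb : ‖(h - g') t‖ ≤ (cM : ℝ) := by
        calc ‖(h - g') t‖ ≤ ‖h t‖ + ‖g' t‖ := norm_sub_le _ _
          _ ≤ (M:ℝ) + 2 * (M:ℝ) := add_le_add (hbd t) (norm_clampC (Nat.cast_nonneg M) _)
          _ ≤ (cM : ℝ) := by
              simp only [hcM]
              push_cast
              linarith
      have hbnn : (‖(h - g') t‖₊ : ℝ≥0∞) ≤ (cM : ℝ≥0∞) := by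
        rw [ENNReal.coe_le_coe, ← NNReal.coe_le_coe, coe_nnnorm]
        exact hb
      rw [Set.indicator_of_mem ht, Pi.one_apply, mul_one]
      exact hbnn.trans le_add_self
    · have hb : ‖(h - g') t‖ ≤ (r:ℝ) := by
        have hnotlt : ¬ ((r:ℝ) < ‖h t - g₀ t‖) := ht
        have h2 : ‖h t - g₀ t‖ ≤ (r:ℝ) := not_lt.1 hnotlt
        have h3 : ‖clampC (M:ℝ) (g₀ t) - h t‖ ≤ ‖g₀ t - h t‖ :=
          clampC_norm_sub_le _ _ (hbd t)
        calc ‖(h - g') t‖ = ‖clampC (M:ℝ) (g₀ t) - h t‖ := by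
              rw [Pi.sub_apply, norm_sub_rev]
          _ ≤ ‖g₀ t - h t‖ := h3
          _ = ‖h t - g₀ t‖ := norm_sub_rev _ _
          _ ≤ (r:ℝ) := h2
      rw [Set.indicator_of_notMem ht]
      have hbnn : (‖(h - g') t‖₊ : ℝ≥0∞) ≤ (r : ℝ≥0∞) := by
        rw [ENNReal.coe_le_coe, ← NNReal.coe_le_coe, coe_nnnorm]
        exact hb
      simpa using hbnn
  have h2 : ρ.N (h - g') < ε / 3 + ε / 3 := by
    have hstep : ρ.N (h - g') ≤
        ρ.ρ ((fun _ => (r:ℝ≥0∞)) + fun t => (cM:ℝ≥0∞) * E'.indicator 1 t) := by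
      refine ρ.mono _ _ (Filter.Eventually.of_forall fun t => ?_)
      exact hpt t
    have htri := ρ.triangle (fun _ => (r:ℝ≥0∞)) (fun t => (cM:ℝ≥0∞) * E'.indicator 1 t)
    have hterm1 : ρ.ρ (fun _ => (r:ℝ≥0∞)) < ε / 3 := by
      rw [show (fun _ : UC => (r:ℝ≥0∞)) = fun t => (r:ℝ≥0∞) * (fun _ : UC => (1:ℝ≥0∞)) t by
        funext t; simp, ρ.smul_eq]
      exact hrρ
    have hterm2 : ρ.ρ (fun t => (cM:ℝ≥0∞) * E'.indicator 1 t) < ε / 3 := by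
      rw [ρ.smul_eq (E'.indicator 1) cM]
      calc (cM:ℝ≥0∞) * ρ.ρ (E'.indicator 1)
          < (cM:ℝ≥0∞) * (ε / 3 / cM) := by
            exact ENNReal.mul_lt_mul_right hcM0 ENNReal.coe_ne_top
              (hδsmall E' hE'm (hmE'.trans_le (min_le_left _ _)))
        _ = ε / 3 := ENNReal.mul_div_cancel hcM0 ENNReal.coe_ne_top
    exact lt_of_le_of_lt (hstep.trans htri) (ENNReal.add_lt_add hterm1 hterm2)
  refine ⟨g', hg'cont, ?_⟩
  have hNfg : ρ.N (f - g') = ρ.N (f' - g') := N_congr (hff'.sub (EventuallyEq.refl _ _))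
  calc ρ.N (f - g') = ρ.N (f' - g') := hNfg
    _ ≤ ρ.N (f' - h) + ρ.N (h - g') := N_sub_le _ _ _
    _ < ε / 3 + (ε / 3 + ε / 3) := ENNReal.add_lt_add h1 h2
    _ = ε := by
        rw [ENNReal.div_add_div_same, ENNReal.div_add_div_same]
        rw [show ε + (ε + ε) = 3 * ε by ring, mul_comm, mul_div_assoc]
        rw [ENNReal.div_self (by norm_num) (by norm_num), mul_one]

end BFNorm
end
noncomputable section
namespace BFNorm
variable {ρ : BFNorm}

lemma zero_mem_trigPoly : (0 : UC → ℂ) ∈ TrigPoly := by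
  refine ⟨0, fun _ => 0, ?_⟩
  funext x
  simp

lemma exists_trig_unif (G : C(UC, ℂ)) {r : ℝ} (hr : 0 < r) :
    ∃ q ∈ TrigPoly, ∀ x, ‖G x - q x‖ ≤ r := by
  have hdense := span_fourier_closure_eq_top (T := 2 * π)
  have hmem : G ∈ (Submodule.span ℂ (Set.range (@fourier (2 * π)))).topologicalClosure := by
    rw [hdense]; exact Submodule.mem_top
  have hmem' : G ∈ closure ((Submodule.span ℂ (Set.range (@fourier (2 * π)))) : Set _) := by
    rwa [← Submodule.topologicalClosure_coe]
  obtain ⟨p, hp, hdist⟩ := Metric.mem_closure_iff.1 hmem' r hr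
  rw [SetLike.mem_coe, Finsupp.mem_span_range_iff_exists_finsupp] at hp
  obtain ⟨c, hc⟩ := hp
  set n : ℕ := c.support.sup Int.natAbs with hn
  have hsupp : c.support ⊆ Finset.Icc (-(n : ℤ)) (n : ℤ) := by
    intro k hk
    have := Finset.le_sup (f := Int.natAbs) hk
    rw [Finset.mem_Icc]
    omega
  refine ⟨fun x => ∑ k ∈ Finset.Icc (-(n : ℤ)) (n : ℤ), c k * fourier k x,
    ⟨n, fun k => c k, rfl⟩, fun x => ?_⟩
  have hpx : p x = ∑ k ∈ Finset.Icc (-(n : ℤ)) (n : ℤ), c k * fourier k x := by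
    have h1 : p x = ∑ k ∈ c.support, c k * fourier k x := by
      rw [← hc]
      show (∑ k ∈ c.support, c k • fourier k) x = _
      rw [ContinuousMap.coe_sum, Finset.sum_apply]
      exact Finset.sum_congr rfl fun k _ => by simp
    rw [h1]
    refine Finset.sum_subset hsupp fun k _ hk => ?_
    rw [Finsupp.notMem_support_iff.1 hk, zero_mul]
  simp only [← hpx]
  calc ‖G x - p x‖ = dist (G x) (p x) := (dist_eq_norm _ _).symm
    _ ≤ dist G p := ContinuousMap.dist_apply_le_dist x
    _ ≤ r := hdist.le

lemma cont_dense_trig (hcont : ρ.DenseIn {f : UC → ℂ | Continuous f}) :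
    ρ.DenseIn TrigPoly := by
  intro f hf ε hε
  rcases eq_or_ne ε ⊤ with rfl | hεt
  · exact ⟨0, zero_mem_trigPoly, by rw [sub_zero]; exact hf.2.trans_le le_top⟩
  have hε2 : (0:ℝ≥0∞) < ε / 2 := ENNReal.div_pos hε.ne' (by norm_num)
  obtain ⟨g, hgcont, hgN⟩ := hcont f hf (ε / 2) hε2
  obtain ⟨r, hr0, hrρ⟩ := exists_nnreal_mul_lt (ρ.rho_one_lt_top).ne hε2
  obtain ⟨q, hqT, hq⟩ := exists_trig_unif ⟨g, hgcont⟩ (show (0:ℝ) < r by exact_mod_cast hr0)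
  refine ⟨q, hqT, ?_⟩
  have hNgq : ρ.N (g - q) ≤ (r : ℝ≥0∞) * ρ.ρ (fun _ => 1) := by
    refine N_le_const fun t => ?_
    rw [← NNReal.coe_le_coe, coe_nnnorm]
    exact hq t
  calc ρ.N (f - q) ≤ ρ.N (f - g) + ρ.N (g - q) := N_sub_le _ _ _
    _ < ε / 2 + ε / 2 := ENNReal.add_lt_add hgN (hNgq.trans_lt hrρ)
    _ = ε := ENNReal.add_halves ε

end BFNorm
end
noncomputable section
namespace BFNorm
variable {ρ : BFNorm}

lemma ratC_approx (z : ℂ) {d : ℝ} (hd : 0 < d) :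
    ∃ a b : ℚ, ‖z - ((a : ℂ) + (b : ℂ) * Complex.I)‖ ≤ d := by
  obtain ⟨a, ha⟩ := exists_rat_near z.re (half_pos hd)
  obtain ⟨b, hb⟩ := exists_rat_near z.im (half_pos hd)
  refine ⟨a, b, ?_⟩
  have hre : (z - ((a : ℂ) + (b : ℂ) * Complex.I)).re = z.re - a := by simp
  have him : (z - ((a : ℂ) + (b : ℂ) * Complex.I)).im = z.im - b := by simp
  calc ‖z - ((a : ℂ) + (b : ℂ) * Complex.I)‖
      ≤ |(z - ((a : ℂ) + (b : ℂ) * Complex.I)).re| + |(z - ((a : ℂ) + (b : ℂ) * Complex.I)).im| := by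
        exact Complex.norm_le_abs_re_add_abs_im _
    _ ≤ d / 2 + d / 2 := by rw [hre, him]; exact add_le_add ha.le hb.le
    _ = d := add_halves d

/-- countable set of trigonometric polynomials with rational coefficients -/
def ratTrig : Set (UC → ℂ) :=
  ⋃ n : ℕ, Set.range (fun v : {k // k ∈ Finset.Icc (-(n : ℤ)) (n : ℤ)} → ℚ × ℚ =>
    fun x : UC => ∑ k ∈ (Finset.Icc (-(n : ℤ)) (n : ℤ)).attach,
      (((v k).1 : ℂ) + ((v k).2 : ℂ) * Complex.I) * fourier (k : ℤ) x)

lemma ratTrig_countable : ratTrig.Countable :=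
  Set.countable_iUnion fun n => Set.countable_range _

lemma ratTrig_mem (ρ : BFNorm) : ∀ g ∈ ratTrig, ρ.mem g := by
  intro g hg
  obtain ⟨_, ⟨n, rfl⟩, hgr⟩ := hg
  obtain ⟨v, rfl⟩ := hgr
  refine cont_mem ?_
  exact continuous_finset_sum _ fun k _ => continuous_const.mul (fourier (k : ℤ)).continuous

lemma norm_fourier_eq_one (k : ℤ) (x : UC) : ‖fourier k x‖ = 1 := by
  rw [fourier_apply, Circle.norm_coe]

lemma trig_dense_sep (htrig : ρ.DenseIn TrigPoly) : ρ.Separable := by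
  refine ⟨ratTrig, ratTrig_countable, ratTrig_mem ρ, ?_⟩
  intro f hf ε hε
  have hε2 : (0:ℝ≥0∞) < ε / 2 := ENNReal.div_pos hε.ne' (by norm_num)
  obtain ⟨q, hqT, hqN⟩ := htrig f hf (ε / 2) hε2
  obtain ⟨n, α, hq⟩ := hqT
  obtain ⟨s, hs0, hsρ⟩ := exists_nnreal_mul_lt (ρ.rho_one_lt_top).ne hε2
  set c : ℕ := (Finset.Icc (-(n : ℤ)) (n : ℤ)).card with hc
  have hd0 : (0:ℝ) < (s : ℝ) / (c + 1) := by positivity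
  have hch : ∀ k : {k // k ∈ Finset.Icc (-(n : ℤ)) (n : ℤ)},
      ∃ a b : ℚ, ‖α (k : ℤ) - ((a : ℂ) + (b : ℂ) * Complex.I)‖ ≤ (s : ℝ) / (c + 1) :=
    fun k => ratC_approx _ hd0
  choose va vb hv using hch
  set g : UC → ℂ := fun x => ∑ k ∈ (Finset.Icc (-(n : ℤ)) (n : ℤ)).attach,
    (((va k : ℚ) : ℂ) + ((vb k : ℚ) : ℂ) * Complex.I) * fourier (k : ℤ) x with hg
  have hgmem : g ∈ ratTrig := by
    refine Set.mem_iUnion.2 ⟨n, ⟨fun k => (va k, vb k), rfl⟩⟩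
  refine ⟨g, hgmem, ?_⟩
  have hbound : ∀ x, ‖q x - g x‖ ≤ (s : ℝ) := by
    intro x
    have hqx : q x = ∑ k ∈ (Finset.Icc (-(n : ℤ)) (n : ℤ)).attach,
        α (k : ℤ) * fourier (k : ℤ) x := by
      rw [hq]
      exact (Finset.sum_attach _ _).symm
    rw [hqx, hg, ← Finset.sum_sub_distrib]
    calc ‖∑ k ∈ (Finset.Icc (-(n : ℤ)) (n : ℤ)).attach,
          (α (k : ℤ) * fourier (k : ℤ) x -
            (((va k : ℚ) : ℂ) + ((vb k : ℚ) : ℂ) * Complex.I) * fourier (k : ℤ) x)‖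
        ≤ ∑ k ∈ (Finset.Icc (-(n : ℤ)) (n : ℤ)).attach, (s : ℝ) / (c + 1) := by
          refine norm_sum_le_of_le _ fun k _ => ?_
          rw [← sub_mul, norm_mul, norm_fourier_eq_one, mul_one]
          exact hv k
      _ = c * ((s : ℝ) / (c + 1)) := by
          rw [Finset.sum_const, Finset.card_attach, nsmul_eq_mul, hc]
      _ ≤ (c + 1) * ((s : ℝ) / (c + 1)) := by
          refine mul_le_mul_of_nonneg_right ?_ hd0.le
          linarith
      _ = (s : ℝ) := by field_simp
  have hNqg : ρ.N (q - g) ≤ (s : ℝ≥0∞) * ρ.ρ (fun _ => 1) := by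
    refine N_le_const fun t => ?_
    rw [← NNReal.coe_le_coe, coe_nnnorm]
    exact hbound t
  calc ρ.N (f - g) ≤ ρ.N (f - q) + ρ.N (q - g) := N_sub_le _ _ _
    _ < ε / 2 + ε / 2 := ENNReal.add_lt_add hqN (hNqg.trans_lt hsρ)
    _ = ε := ENNReal.add_halves ε

end BFNorm
end

noncomputable section

theorem stmt7 (ρ : BFNorm) :
    (ρ.DenseIn TrigPoly ↔ ρ.Separable) ∧
    (ρ.DenseIn {f : UC → ℂ | Continuous f} ↔ ρ.Separable) := by
  constructor
  · exact ⟨BFNorm.trig_dense_sep,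
      fun hsep => BFNorm.cont_dense_trig (BFNorm.sep_dense_cont hsep)⟩
  · exact ⟨fun hc => BFNorm.trig_dense_sep (BFNorm.cont_dense_trig hc),
      BFNorm.sep_dense_cont⟩

end
end
end
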